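/- Let Y be a Banach space, B ∈ L(Y), and ε > 0. Then the open ε-pseudospectrum satisfies spec_ε B = ⋃_{‖T‖ < ε} Spec(B + T), the union being over all bounded operators T on Y with norm strictly less than ε. -/

import Mathlib

/-- The open `ε`-pseudospectrum of `B` (convention: `1/‖(B−λI)⁻¹‖ = 0` when
`B − λI` is not invertible). -/
noncomputable def openPseudospectrum {Y : Type*} [NormedAddCommGroup Y] [NormedSpace ℂ Y]
    (ε : ℝ) (B : Y →L[ℂ] Y) : Set ℂ :=
  {lam : ℂ | ‖Ring.inverse (B - lam • (1 : Y →L[ℂ] Y))‖⁻¹ < ε}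

/-- For `ε > 0`, the open `ε`-pseudospectrum of `B` is the union of the spectra of all
perturbations `B + T` with `‖T‖ < ε`. -/
theorem stmt_7 {Y : Type*} [NormedAddCommGroup Y] [NormedSpace ℂ Y] [CompleteSpace Y]
    [Nontrivial Y] (B : Y →L[ℂ] Y) (ε : ℝ) (hε : 0 < ε) :
    openPseudospectrum ε B = ⋃ (T : Y →L[ℂ] Y) (_ : ‖T‖ < ε), spectrum ℂ (B + T) := by
  have halg : ∀ (C : Y →L[ℂ] Y) (lam : ℂ),
      algebraMap ℂ (Y →L[ℂ] Y) lam - C = -(C - lam • 1) := by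
    intro C lam
    rw [Algebra.algebraMap_eq_smul_one, neg_sub]
  ext lam
  simp only [openPseudospectrum, Set.mem_setOf_eq, Set.mem_iUnion, spectrum.mem_iff]
  set A : Y →L[ℂ] Y := B - lam • 1 with hAdef
  have one_ne : (1 : Y →L[ℂ] Y) ≠ 0 := by
    obtain ⟨x, hx⟩ := exists_ne (0 : Y)
    intro h
    have := ContinuousLinearMap.ext_iff.1 h x
    simp only [ContinuousLinearMap.one_apply, ContinuousLinearMap.zero_apply] at this
    exact hx this
  constructor
  · intro h
    by_cases hA : IsUnit A
    · -- A invertible, small norm of inverse means we can perturb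
      set R : Y →L[ℂ] Y := ↑hA.unit⁻¹ with hRdef
      have hinv : Ring.inverse A = R := by
        rw [← hA.unit_spec, Ring.inverse_unit]
      rw [hinv] at h
      have hAR : A * R = 1 := hA.mul_val_inv
      have hR0 : R ≠ 0 := by
        intro h0
        apply one_ne
        rw [← hAR, h0, mul_zero]
      have hRpos : 0 < ‖R‖ := norm_pos_iff.2 hR0
      have hlt : ε⁻¹ < ‖R‖ := by
        rwa [inv_lt_comm₀ hRpos hε] at h
      obtain ⟨y, hy1, hy2⟩ := R.exists_lt_apply_of_lt_opNorm hlt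
      set x : Y := R y with hxdef
      have hAx : A x = y := by
        rw [hxdef, ← ContinuousLinearMap.mul_apply, hAR, ContinuousLinearMap.one_apply]
      have hxpos : 0 < ‖x‖ := lt_of_le_of_lt (by positivity) hy2
      have hx0 : x ≠ 0 := norm_pos_iff.1 hxpos
      have hxC : (‖x‖ : ℂ) ≠ 0 := by exact_mod_cast hxpos.ne'
      obtain ⟨g, hg1, hg2⟩ := exists_dual_vector ℂ x hxpos.ne'
      set T : Y →L[ℂ] Y := -(((‖x‖ : ℂ))⁻¹ • g.smulRight y) with hTdef
      have hTx : T x = -y := by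
        simp only [hTdef, ContinuousLinearMap.neg_apply, ContinuousLinearMap.smul_apply,
          ContinuousLinearMap.smulRight_apply, hg2, smul_smul]
        simp [inv_mul_cancel₀ hxC]
      have hTnorm : ‖T‖ < ε := by
        have h1 : ‖T‖ ≤ ‖x‖⁻¹ * ‖y‖ := by
          have e1 : ‖T‖ = ‖((‖x‖ : ℂ))⁻¹‖ * ‖g.smulRight y‖ := by
            rw [hTdef, norm_neg]; exact norm_smul ((‖x‖ : ℂ))⁻¹ (g.smulRight y)
          rw [e1, ContinuousLinearMap.norm_smulRight_apply, hg1, one_mul, norm_inv,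
            Complex.norm_real, Real.norm_of_nonneg (norm_nonneg x)]
        have h2 : ‖x‖⁻¹ < ε := (inv_lt_comm₀ hxpos hε).2 hy2
        calc ‖T‖ ≤ ‖x‖⁻¹ * ‖y‖ := h1
          _ ≤ ‖x‖⁻¹ * 1 := by gcongr
          _ = ‖x‖⁻¹ := mul_one _
          _ < ε := h2
      refine ⟨T, hTnorm, ?_⟩
      have key : algebraMap ℂ (Y →L[ℂ] Y) lam - (B + T) = -(A + T) := by
        rw [halg]; congr 1; rw [hAdef]; abel
      rw [key, IsUnit.neg_iff]
      intro hu
      have hIM : (↑hu.unit⁻¹ : Y →L[ℂ] Y) * (A + T) = 1 := hu.val_inv_mul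
      apply hx0
      have h0 : (A + T) x = 0 := by
        rw [ContinuousLinearMap.add_apply, hAx, hTx, add_neg_cancel]
      calc x = ((↑hu.unit⁻¹ : Y →L[ℂ] Y) * (A + T)) x := by
              rw [hIM, ContinuousLinearMap.one_apply]
        _ = (↑hu.unit⁻¹ : Y →L[ℂ] Y) ((A + T) x) := rfl
        _ = 0 := by rw [h0, map_zero]
    · refine ⟨0, by simpa using hε, ?_⟩
      rw [add_zero, halg, IsUnit.neg_iff]
      exact hA
  · rintro ⟨T, hT, hspec⟩
    by_cases hA : IsUnit A
    · set R : Y →L[ℂ] Y := ↑hA.unit⁻¹ with hRdef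
      have hinv : Ring.inverse A = R := by
        rw [← hA.unit_spec, Ring.inverse_unit]
      rw [hinv]
      by_contra h'
      push_neg at h'
      have hAR : A * R = 1 := hA.mul_val_inv
      have hR0 : R ≠ 0 := by
        intro h0
        apply one_ne
        rw [← hAR, h0, mul_zero]
      have hRpos : 0 < ‖R‖ := norm_pos_iff.2 hR0
      have hRT : ‖-(R * T)‖ < 1 := by
        rw [norm_neg]
        calc ‖R * T‖ ≤ ‖R‖ * ‖T‖ := norm_mul_le _ _
          _ < ‖R‖ * ‖R‖⁻¹ := by gcongr; exact lt_of_lt_of_le hT h'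
          _ = 1 := mul_inv_cancel₀ hRpos.ne'
      have hu : IsUnit (1 - -(R * T)) := (Units.oneSub _ hRT).isUnit
      have hfact : A + T = A * (1 - -(R * T)) := by
        rw [sub_neg_eq_add, mul_add, mul_one, ← mul_assoc, hAR, one_mul]
      have : IsUnit (A + T) := hfact ▸ hA.mul hu
      apply hspec
      have key : algebraMap ℂ (Y →L[ℂ] Y) lam - (B + T) = -(A + T) := by
        rw [halg]; congr 1; rw [hAdef]; abel
      rw [key, IsUnit.neg_iff]
      exact this
    · rw [Ring.inverse_non_unit _ hA]
      simpa using hε
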